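/- Let (H,R,χ) be a pre-Cartier quasitriangular bialgebra and F ∈ H⊗H a Drinfel'd twist. Then (H_F, R_F, χ_F) is a pre-Cartier quasitriangular bialgebra, where H_F is H with comultiplication Δ_F = FΔ(·)F⁻¹, R_F = FᵒᵖRF⁻¹ and χ_F = FχF⁻¹. If (H,R,χ) is Cartier, so is (H_F, R_F, χ_F). -/

import Mathlib

open scoped TensorProduct

noncomputable section

variable (k H : Type*) [CommRing k] [Ring H] [Bialgebra k H]

/-- leg embedding `a ⊗ b ↦ a ⊗ b ⊗ 1` into `H ⊗ (H ⊗ H)`. -/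
def leg12 : H ⊗[k] H →ₐ[k] H ⊗[k] (H ⊗[k] H) :=
  Algebra.TensorProduct.map (AlgHom.id k H) Algebra.TensorProduct.includeLeft

/-- leg embedding `a ⊗ b ↦ 1 ⊗ a ⊗ b`. -/
def leg23 : H ⊗[k] H →ₐ[k] H ⊗[k] (H ⊗[k] H) :=
  Algebra.TensorProduct.includeRight

/-- leg embedding `a ⊗ b ↦ a ⊗ 1 ⊗ b`. -/
def leg13 : H ⊗[k] H →ₐ[k] H ⊗[k] (H ⊗[k] H) :=
  Algebra.TensorProduct.map (AlgHom.id k H) Algebra.TensorProduct.includeRight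

/-- `(Id ⊗ Δ)` as an algebra map `H ⊗ H → H ⊗ (H ⊗ H)`. -/
def idComul : H ⊗[k] H →ₐ[k] H ⊗[k] (H ⊗[k] H) :=
  Algebra.TensorProduct.map (AlgHom.id k H) (Bialgebra.comulAlgHom k H)

/-- `(Δ ⊗ Id)` as an algebra map `H ⊗ H → H ⊗ (H ⊗ H)` (after reassociation). -/
def comulId : H ⊗[k] H →ₐ[k] H ⊗[k] (H ⊗[k] H) :=
  (Algebra.TensorProduct.assoc k k k H H H).toAlgHom.comp
    (Algebra.TensorProduct.map (Bialgebra.comulAlgHom k H) (AlgHom.id k H))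

/-- the flip `a ⊗ b ↦ b ⊗ a` as an algebra map. -/
def swapT : H ⊗[k] H →ₐ[k] H ⊗[k] H := (Algebra.TensorProduct.comm k H H).toAlgHom

section TwistAux

-- auxiliary defs
def cop : H →ₐ[k] H ⊗[k] H := (swapT k H).comp (Bialgebra.comulAlgHom k H)

def idComul' : H ⊗[k] H →ₐ[k] H ⊗[k] (H ⊗[k] H) :=
  Algebra.TensorProduct.map (AlgHom.id k H) (cop k H)

def comulId' : H ⊗[k] H →ₐ[k] H ⊗[k] (H ⊗[k] H) :=
  (Algebra.TensorProduct.assoc k k k H H H).toAlgHom.comp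
    (Algebra.TensorProduct.map (cop k H) (AlgHom.id k H))

def permP23 : H ⊗[k] (H ⊗[k] H) →ₐ[k] H ⊗[k] (H ⊗[k] H) :=
  Algebra.TensorProduct.map (AlgHom.id k H) (Algebra.TensorProduct.comm k H H).toAlgHom

def permP12 : H ⊗[k] (H ⊗[k] H) →ₐ[k] H ⊗[k] (H ⊗[k] H) :=
  (Algebra.TensorProduct.assoc k k k H H H).toAlgHom.comp
    ((Algebra.TensorProduct.map (Algebra.TensorProduct.comm k H H).toAlgHom (AlgHom.id k H)).comp
      (Algebra.TensorProduct.assoc k k k H H H).symm.toAlgHom)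

def cycL : H ⊗[k] (H ⊗[k] H) →ₐ[k] H ⊗[k] (H ⊗[k] H) :=
  (Algebra.TensorProduct.assoc k k k H H H).toAlgHom.comp
    (Algebra.TensorProduct.comm k H (H ⊗[k] H)).toAlgHom

def cycR : H ⊗[k] (H ⊗[k] H) →ₐ[k] H ⊗[k] (H ⊗[k] H) :=
  (Algebra.TensorProduct.comm k (H ⊗[k] H) H).toAlgHom.comp
    (Algebra.TensorProduct.assoc k k k H H H).symm.toAlgHom

variable {k H}

@[simp] lemma swapT_tmul (a b : H) : swapT k H (a ⊗ₜ[k] b) = b ⊗ₜ[k] a := rfl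

@[simp] lemma leg12_tmul (a b : H) : leg12 k H (a ⊗ₜ[k] b) = a ⊗ₜ[k] (b ⊗ₜ[k] (1:H)) := rfl

@[simp] lemma leg13_tmul (a b : H) : leg13 k H (a ⊗ₜ[k] b) = a ⊗ₜ[k] ((1:H) ⊗ₜ[k] b) := rfl

@[simp] lemma leg23_apply (X : H ⊗[k] H) : leg23 k H X = (1:H) ⊗ₜ[k] X := rfl

@[simp] lemma idComul_tmul (a b : H) :
    idComul k H (a ⊗ₜ[k] b) = a ⊗ₜ[k] (Coalgebra.comul (R := k) b) := rfl

@[simp] lemma comulId_tmul (a b : H) :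
    comulId k H (a ⊗ₜ[k] b)
      = (Algebra.TensorProduct.assoc k k k H H H) ((Coalgebra.comul (R := k) a) ⊗ₜ[k] b) := rfl

@[simp] lemma idComul'_tmul (a b : H) :
    idComul' k H (a ⊗ₜ[k] b) = a ⊗ₜ[k] (swapT k H (Coalgebra.comul (R := k) b)) := rfl

@[simp] lemma comulId'_tmul (a b : H) :
    comulId' k H (a ⊗ₜ[k] b)
      = (Algebra.TensorProduct.assoc k k k H H H) ((swapT k H (Coalgebra.comul (R := k) a)) ⊗ₜ[k] b) := rfl

@[simp] lemma permP23_tmul (a : H) (u : H ⊗[k] H) :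
    permP23 k H (a ⊗ₜ[k] u) = a ⊗ₜ[k] (swapT k H u) := rfl

@[simp] lemma permP12_tmul3 (a b c : H) :
    permP12 k H (a ⊗ₜ[k] (b ⊗ₜ[k] c)) = b ⊗ₜ[k] (a ⊗ₜ[k] c) := rfl

@[simp] lemma cycL_tmul (a : H) (u : H ⊗[k] H) :
    cycL k H (a ⊗ₜ[k] u) = (Algebra.TensorProduct.assoc k k k H H H) (u ⊗ₜ[k] a) := rfl

@[simp] lemma cycR_assoc (u : H ⊗[k] H) (a : H) :
    cycR k H ((Algebra.TensorProduct.assoc k k k H H H) (u ⊗ₜ[k] a)) = a ⊗ₜ[k] u := by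
  simp [cycR, Algebra.TensorProduct.comm_tmul]

lemma leg12_eq (X : H ⊗[k] H) :
    leg12 k H X = (Algebra.TensorProduct.assoc k k k H H H) (X ⊗ₜ[k] (1:H)) := by
  induction X using TensorProduct.induction_on with
  | zero => simp [TensorProduct.zero_tmul]
  | tmul a b => simp
  | add x y hx hy => simp [TensorProduct.add_tmul, hx, hy]

-- generalized permutation identities
lemma GE3 (a : H) (u : H ⊗[k] H) :
    cycR k H (a ⊗ₜ[k] u) = permP12 k H (a ⊗ₜ[k] (swapT k H u)) := by
  induction u using TensorProduct.induction_on with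
  | zero => simp [TensorProduct.tmul_zero]
  | tmul b c => simp [cycR]
  | add x y hx hy => simp [TensorProduct.tmul_add, hx, hy]

lemma GE7 (u : H ⊗[k] H) (b : H) :
    cycL k H ((Algebra.TensorProduct.assoc k k k H H H) (u ⊗ₜ[k] b))
      = permP23 k H ((Algebra.TensorProduct.assoc k k k H H H) ((swapT k H u) ⊗ₜ[k] b)) := by
  induction u using TensorProduct.induction_on with
  | zero => simp [TensorProduct.zero_tmul]
  | tmul x y => simp
  | add x y hx hy => simp [TensorProduct.add_tmul, hx, hy]

lemma GE10 (u : H ⊗[k] H) (b : H) :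
    permP12 k H ((Algebra.TensorProduct.assoc k k k H H H) (u ⊗ₜ[k] b))
      = (Algebra.TensorProduct.assoc k k k H H H) ((swapT k H u) ⊗ₜ[k] b) := by
  induction u using TensorProduct.induction_on with
  | zero => simp [TensorProduct.zero_tmul]
  | tmul x y => simp
  | add x y hx hy => simp [TensorProduct.add_tmul, hx, hy]

-- E lemmas
lemma E1 (X : H ⊗[k] H) : cycR k H (leg23 k H X) = leg13 k H (swapT k H X) := by
  induction X using TensorProduct.induction_on with
  | zero => simp
  | tmul a b => simp [cycR]
  | add x y hx hy => simp only [map_add, hx, hy]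

lemma E11 (X : H ⊗[k] H) : permP12 k H (leg23 k H X) = leg13 k H X := by
  induction X using TensorProduct.induction_on with
  | zero => simp
  | tmul a b => simp
  | add x y hx hy => simp only [map_add, hx, hy]

lemma E2 (X : H ⊗[k] H) : cycR k H (leg12 k H X) = leg23 k H X := by
  rw [leg12_eq, cycR_assoc]; rfl

lemma E4 (X : H ⊗[k] H) : cycR k H (comulId k H X) = idComul k H (swapT k H X) := by
  induction X using TensorProduct.induction_on with
  | zero => simp
  | tmul a b => simp
  | add x y hx hy => simp only [map_add, hx, hy]

lemma E3 (X : H ⊗[k] H) : cycR k H (idComul k H X) = permP12 k H (idComul' k H X) := by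
  induction X using TensorProduct.induction_on with
  | zero => simp
  | tmul a b => exact GE3 a _
  | add x y hx hy => simp only [map_add, hx, hy]

lemma E5 (X : H ⊗[k] H) : cycL k H (leg12 k H X) = leg13 k H (swapT k H X) := by
  induction X using TensorProduct.induction_on with
  | zero => simp
  | tmul a b => simp
  | add x y hx hy => simp only [map_add, hx, hy]

lemma E6 (X : H ⊗[k] H) : cycL k H (leg23 k H X) = leg12 k H X := by
  rw [leg23_apply, cycL_tmul, leg12_eq]

lemma E7 (X : H ⊗[k] H) : cycL k H (comulId k H X) = permP23 k H (comulId' k H X) := by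
  induction X using TensorProduct.induction_on with
  | zero => simp
  | tmul a b => exact GE7 _ b
  | add x y hx hy => simp only [map_add, hx, hy]

lemma E8 (X : H ⊗[k] H) : cycL k H (idComul k H X) = comulId k H (swapT k H X) := by
  induction X using TensorProduct.induction_on with
  | zero => simp
  | tmul a b => simp
  | add x y hx hy => simp only [map_add, hx, hy]

lemma E9 (X : H ⊗[k] H) : permP12 k H (leg12 k H X) = leg12 k H (swapT k H X) := by
  induction X using TensorProduct.induction_on with
  | zero => simp
  | tmul a b => simp
  | add x y hx hy => simp only [map_add, hx, hy]

lemma E10 (X : H ⊗[k] H) : permP12 k H (comulId k H X) = comulId' k H X := by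
  induction X using TensorProduct.induction_on with
  | zero => simp
  | tmul a b => exact GE10 _ b
  | add x y hx hy => simp only [map_add, hx, hy]

lemma E12 (X : H ⊗[k] H) : permP23 k H (leg12 k H X) = leg13 k H X := by
  induction X using TensorProduct.induction_on with
  | zero => simp
  | tmul a b => simp
  | add x y hx hy => simp only [map_add, hx, hy]

lemma E14 (X : H ⊗[k] H) : permP23 k H (idComul k H X) = idComul' k H X := by
  induction X using TensorProduct.induction_on with
  | zero => simp
  | tmul a b => simp
  | add x y hx hy => simp only [map_add, hx, hy]

lemma E15 (X : H ⊗[k] H) : permP23 k H (leg23 k H X) = leg23 k H (swapT k H X) := by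
  rw [leg23_apply, permP23_tmul, leg23_apply]

-- monoid helpers
lemma sand {M : Type*} [Monoid M] {x y : M} (h : x * y = 1) (z : M) : x * (y * z) = z := by
  rw [← mul_assoc, h, one_mul]

lemma mm {M : Type*} [Semigroup M] {a b c d : M} (h : a * b = c * d) (z : M) :
    a * (b * z) = c * (d * z) := by
  rw [← mul_assoc, h, mul_assoc]

lemma mm1 {M : Type*} [Semigroup M] {a b c : M} (h : a * b = c) (z : M) :
    a * (b * z) = c * z := by
  rw [← mul_assoc, h]

lemma mapmul_one {A B : Type*} [Semiring A] [Semiring B] [Algebra k A] [Algebra k B]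
    (φ : A →ₐ[k] B) {x y : A} (h : x * y = 1) : φ x * φ y = 1 := by
  rw [← map_mul, h, map_one]

-- multiplication helpers in the triple tensor
lemma mulA (u v : H ⊗[k] H) (b : H) :
    (Algebra.TensorProduct.assoc k k k H H H) (v ⊗ₜ[k] (1:H))
      * (Algebra.TensorProduct.assoc k k k H H H) (u ⊗ₜ[k] b)
    = (Algebra.TensorProduct.assoc k k k H H H) ((v * u) ⊗ₜ[k] b) := by
  rw [← map_mul, Algebra.TensorProduct.tmul_mul_tmul, one_mul]

lemma mulA' (u v : H ⊗[k] H) (b : H) :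
    (Algebra.TensorProduct.assoc k k k H H H) (u ⊗ₜ[k] b)
      * (Algebra.TensorProduct.assoc k k k H H H) (v ⊗ₜ[k] (1:H))
    = (Algebra.TensorProduct.assoc k k k H H H) ((u * v) ⊗ₜ[k] b) := by
  rw [← map_mul, Algebra.TensorProduct.tmul_mul_tmul, mul_one]

lemma mul23 (v : H ⊗[k] H) (a : H) (u : H ⊗[k] H) :
    ((1:H) ⊗ₜ[k] v) * (a ⊗ₜ[k] u) = a ⊗ₜ[k] (v * u) := by
  rw [Algebra.TensorProduct.tmul_mul_tmul, one_mul]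

lemma mul23' (a : H) (u v : H ⊗[k] H) :
    (a ⊗ₜ[k] u) * ((1:H) ⊗ₜ[k] v) = a ⊗ₜ[k] (u * v) := by
  rw [Algebra.TensorProduct.tmul_mul_tmul, mul_one]

-- p12 factorization
lemma GPhi12 (a : H) (w : H ⊗[k] H) :
    permP12 k H (a ⊗ₜ[k] w) = ((1:H) ⊗ₜ[k] (a ⊗ₜ[k] (1:H))) * leg13 k H w := by
  induction w using TensorProduct.induction_on with
  | zero => simp [TensorProduct.tmul_zero]
  | tmul x y =>
      rw [permP12_tmul3, leg13_tmul, Algebra.TensorProduct.tmul_mul_tmul,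
        Algebra.TensorProduct.tmul_mul_tmul, one_mul, mul_one, one_mul]
  | add x y hx hy => simp only [TensorProduct.tmul_add, map_add, hx, hy, mul_add]

lemma GZ (a : H) (w : H ⊗[k] H) :
    leg13 k H w * ((1:H) ⊗ₜ[k] (a ⊗ₜ[k] (1:H)))
      = ((1:H) ⊗ₜ[k] (a ⊗ₜ[k] (1:H))) * leg13 k H w := by
  induction w using TensorProduct.induction_on with
  | zero => simp
  | tmul x y =>
      rw [leg13_tmul, Algebra.TensorProduct.tmul_mul_tmul, Algebra.TensorProduct.tmul_mul_tmul,
        Algebra.TensorProduct.tmul_mul_tmul, Algebra.TensorProduct.tmul_mul_tmul]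
      rw [one_mul, mul_one, one_mul, mul_one, one_mul, mul_one]
  | add x y hx hy => simp only [map_add, hx, hy, mul_add, add_mul]

-- p23∘assoc factorization
lemma GPhi23 (b : H) (w : H ⊗[k] H) :
    permP23 k H ((Algebra.TensorProduct.assoc k k k H H H) (w ⊗ₜ[k] b))
      = ((1:H) ⊗ₜ[k] (b ⊗ₜ[k] (1:H))) * leg13 k H w := by
  induction w using TensorProduct.induction_on with
  | zero => simp [TensorProduct.zero_tmul]
  | tmul x y =>
      rw [Algebra.TensorProduct.assoc_tmul, permP23_tmul, swapT_tmul, leg13_tmul,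
        Algebra.TensorProduct.tmul_mul_tmul, Algebra.TensorProduct.tmul_mul_tmul,
        one_mul, mul_one, one_mul]
  | add x y hx hy => simp only [TensorProduct.add_tmul, map_add, hx, hy, mul_add]

-- generic commutation lemmas
lemma key23 (u v : H ⊗[k] H) (φ ψ : H →ₐ[k] H ⊗[k] H)
    (h : ∀ x : H, u * φ x = ψ x * v) (X : H ⊗[k] H) :
    leg23 k H u * (Algebra.TensorProduct.map (AlgHom.id k H) φ) X
      = (Algebra.TensorProduct.map (AlgHom.id k H) ψ) X * leg23 k H v := by
  induction X using TensorProduct.induction_on with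
  | zero => simp
  | tmul a b =>
      rw [Algebra.TensorProduct.map_tmul, Algebra.TensorProduct.map_tmul, leg23_apply,
        leg23_apply, mul23, mul23', AlgHom.coe_id, id_eq, h b]
  | add x y hx hy => simp only [map_add, mul_add, add_mul, hx, hy]

lemma key12 (u v : H ⊗[k] H) (φ ψ : H →ₐ[k] H ⊗[k] H)
    (h : ∀ x : H, u * φ x = ψ x * v) (X : H ⊗[k] H) :
    leg12 k H u * ((Algebra.TensorProduct.assoc k k k H H H).toAlgHom.comp
        (Algebra.TensorProduct.map φ (AlgHom.id k H))) X
      = ((Algebra.TensorProduct.assoc k k k H H H).toAlgHom.comp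
        (Algebra.TensorProduct.map ψ (AlgHom.id k H))) X * leg12 k H v := by
  induction X using TensorProduct.induction_on with
  | zero => simp
  | tmul a b =>
      simp only [AlgHom.coe_comp, Function.comp_apply, Algebra.TensorProduct.map_tmul,
        AlgEquiv.toAlgHom_eq_coe, AlgHom.coe_coe, AlgEquiv.coe_algHom, AlgHom.coe_id, id_eq]
      rw [leg12_eq u, leg12_eq v, mulA, mulA', h a]
  | add x y hx hy => simp only [map_add, mul_add, add_mul, hx, hy]

lemma key13a (u v : H ⊗[k] H) (φ ψ : H →ₐ[k] H ⊗[k] H)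
    (h : ∀ x : H, u * φ x = ψ x * v) (X : H ⊗[k] H) :
    leg13 k H u * permP12 k H ((Algebra.TensorProduct.map (AlgHom.id k H) φ) X)
      = permP12 k H ((Algebra.TensorProduct.map (AlgHom.id k H) ψ) X) * leg13 k H v := by
  induction X using TensorProduct.induction_on with
  | zero => simp
  | tmul a b =>
      rw [Algebra.TensorProduct.map_tmul, Algebra.TensorProduct.map_tmul,
        AlgHom.coe_id, id_eq, GPhi12, GPhi12, ← mul_assoc, GZ, mul_assoc, ← map_mul,
        h b, map_mul, ← mul_assoc, mul_assoc]
  | add x y hx hy => simp only [map_add, mul_add, add_mul, hx, hy]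

lemma key13b (u v : H ⊗[k] H) (φ ψ : H →ₐ[k] H ⊗[k] H)
    (h : ∀ x : H, u * φ x = ψ x * v) (X : H ⊗[k] H) :
    leg13 k H u * permP23 k H (((Algebra.TensorProduct.assoc k k k H H H).toAlgHom.comp
        (Algebra.TensorProduct.map φ (AlgHom.id k H))) X)
      = permP23 k H (((Algebra.TensorProduct.assoc k k k H H H).toAlgHom.comp
        (Algebra.TensorProduct.map ψ (AlgHom.id k H))) X) * leg13 k H v := by
  induction X using TensorProduct.induction_on with
  | zero => simp
  | tmul a b =>
      simp only [AlgHom.coe_comp, Function.comp_apply, Algebra.TensorProduct.map_tmul,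
        AlgEquiv.toAlgHom_eq_coe, AlgHom.coe_coe, AlgEquiv.coe_algHom, AlgHom.coe_id, id_eq]
      rw [GPhi23, GPhi23, ← mul_assoc, GZ, mul_assoc, ← map_mul, h a, map_mul,
        ← mul_assoc, mul_assoc]
  | add x y hx hy => simp only [map_add, mul_add, add_mul, hx, hy]

-- sandwich lemmas for the twisted comultiplications
lemma S1 (F G : H ⊗[k] H) (X : H ⊗[k] H) :
    LinearMap.lTensor H ((LinearMap.mulRight k G).comp
        ((LinearMap.mulLeft k F).comp (Coalgebra.comul (R := k)))) X
      = leg23 k H F * idComul k H X * leg23 k H G := by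
  induction X using TensorProduct.induction_on with
  | zero => simp
  | tmul a b =>
      rw [LinearMap.lTensor_tmul, LinearMap.coe_comp, LinearMap.coe_comp, Function.comp_apply,
        Function.comp_apply, LinearMap.mulRight_apply, LinearMap.mulLeft_apply,
        idComul_tmul, leg23_apply, leg23_apply, mul23, mul23']
  | add x y hx hy => simp only [map_add, mul_add, add_mul, hx, hy]

lemma AL (u : H ⊗[k] H) (b : H) :
    (TensorProduct.assoc k H H H) (u ⊗ₜ[k] b)
      = (Algebra.TensorProduct.assoc k k k H H H) (u ⊗ₜ[k] b) := rfl

lemma S2 (F G : H ⊗[k] H) (X : H ⊗[k] H) :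
    ((TensorProduct.assoc k H H H).toLinearMap.comp
        (LinearMap.rTensor H ((LinearMap.mulRight k G).comp
          ((LinearMap.mulLeft k F).comp (Coalgebra.comul (R := k)))))) X
      = leg12 k H F * comulId k H X * leg12 k H G := by
  induction X using TensorProduct.induction_on with
  | zero => simp
  | tmul a b =>
      rw [LinearMap.coe_comp, Function.comp_apply, LinearMap.rTensor_tmul,
        LinearMap.coe_comp, LinearMap.coe_comp, Function.comp_apply, Function.comp_apply,
        LinearMap.mulRight_apply, LinearMap.mulLeft_apply, LinearEquiv.coe_coe, AL,
        comulId_tmul, leg12_eq F, leg12_eq G, mulA, mulA']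
  | add x y hx hy => simp only [map_add, mul_add, add_mul, hx, hy]

-- more monoid helpers
lemma invUnique' {M : Type*} [Monoid M] {a b c : M} (h1 : a * b = 1) (h2 : c * a = 1) :
    b = c := by
  calc b = 1 * b := (one_mul b).symm
    _ = (c * a) * b := by rw [h2]
    _ = c * (a * b) := mul_assoc _ _ _
    _ = c := by rw [h1, mul_one]

lemma conjInv' {M : Type*} [Monoid M] {a b c d : M} (hab : a * b = 1) (hcd : c * d = 1) :
    (a * c) * (d * b) = 1 := by
  rw [mul_assoc, ← mul_assoc c, hcd, one_mul, hab]


end TwistAux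

/-- A quasitriangular structure on the bialgebra `H`. -/
structure QT where
  R : H ⊗[k] H
  Rinv : H ⊗[k] H
  mul_inv : R * Rinv = 1
  inv_mul : Rinv * R = 1
  quasi_cocomm : ∀ h : H, swapT k H (Coalgebra.comul (R := k) h) * R = R * Coalgebra.comul (R := k) h
  hex1 : idComul k H R = leg13 k H R * leg12 k H R
  hex2 : comulId k H R = leg13 k H R * leg23 k H R

/-- A pre-Cartier quasitriangular bialgebra structure on `H`. -/
structure PreCartier extends QT k H where
  χ : H ⊗[k] H
  chi_comm : ∀ h : H, χ * Coalgebra.comul (R := k) h = Coalgebra.comul (R := k) h * χ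
  chi_hex1 : idComul k H χ = leg12 k H χ + leg12 k H Rinv * leg13 k H χ * leg12 k H R
  chi_hex2 : comulId k H χ = leg23 k H χ + leg23 k H Rinv * leg13 k H χ * leg23 k H R

set_option maxHeartbeats 2000000 in
/-- twisting a pre-Cartier quasitriangular bialgebra `(H,R,χ)` by a Drinfel'd
twist `F` yields a pre-Cartier quasitriangular bialgebra `(H_F, R_F, χ_F)` with
`Δ_F = FΔ(·)F⁻¹`, `R_F = Fᵒᵖ R F⁻¹`, `χ_F = F χ F⁻¹`; Cartier is preserved. -/
theorem twist_preCartier (P : PreCartier k H) (F Finv : H ⊗[k] H)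
    (hF1 : F * Finv = 1) (hF2 : Finv * F = 1)
    (hcocycle : leg12 k H F * comulId k H F = leg23 k H F * idComul k H F)
    (hnorm1 : LinearMap.rTensor H (Coalgebra.counit (R := k) (A := H)) F
      = (1 : k) ⊗ₜ[k] (1 : H))
    (hnorm2 : LinearMap.lTensor H (Coalgebra.counit (R := k) (A := H)) F
      = (1 : H) ⊗ₜ[k] (1 : k)) :
    let ΔF : H →ₗ[k] H ⊗[k] H :=
      (LinearMap.mulRight k Finv).comp
        ((LinearMap.mulLeft k F).comp (Coalgebra.comul (R := k)))
    let idΔF : H ⊗[k] H →ₗ[k] H ⊗[k] (H ⊗[k] H) := LinearMap.lTensor H ΔF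
    let ΔFid : H ⊗[k] H →ₗ[k] H ⊗[k] (H ⊗[k] H) :=
      (TensorProduct.assoc k H H H).toLinearMap.comp (LinearMap.rTensor H ΔF)
    let RF := swapT k H F * P.R * Finv
    let RFinv := F * P.Rinv * swapT k H Finv
    let χF := F * P.χ * Finv
    (RF * RFinv = 1 ∧ RFinv * RF = 1) ∧
    (∀ h : H, swapT k H (ΔF h) * RF = RF * ΔF h) ∧
    idΔF RF = leg13 k H RF * leg12 k H RF ∧
    ΔFid RF = leg13 k H RF * leg23 k H RF ∧
    (∀ h : H, χF * ΔF h = ΔF h * χF) ∧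
    idΔF χF = leg12 k H χF + leg12 k H RFinv * leg13 k H χF * leg12 k H RF ∧
    ΔFid χF = leg23 k H χF + leg23 k H RFinv * leg13 k H χF * leg23 k H RF ∧
    (P.R * P.χ = swapT k H P.χ * P.R → RF * χF = swapT k H χF * RF) := by
  -- basic invertibility facts
  have hττ1 : swapT k H F * swapT k H Finv = 1 := mapmul_one _ hF1
  have hττ2 : swapT k H Finv * swapT k H F = 1 := mapmul_one _ hF2
  have hn_FG : leg23 k H F * leg23 k H Finv = 1 := mapmul_one _ hF1
  have hn_GF : leg23 k H Finv * leg23 k H F = 1 := mapmul_one _ hF2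
  have h12_FG : leg12 k H F * leg12 k H Finv = 1 := mapmul_one _ hF1
  have h12_GF : leg12 k H Finv * leg12 k H F = 1 := mapmul_one _ hF2
  have h13_FG : leg13 k H F * leg13 k H Finv = 1 := mapmul_one _ hF1
  have h13_GF : leg13 k H Finv * leg13 k H F = 1 := mapmul_one _ hF2
  have hτ12_GF : leg12 k H (swapT k H Finv) * leg12 k H (swapT k H F) = 1 := by
    rw [← map_mul, ← map_mul, hF2, map_one, map_one]
  have hτ23_GF : leg23 k H (swapT k H Finv) * leg23 k H (swapT k H F) = 1 := by
    rw [← map_mul, ← map_mul, hF2, map_one, map_one]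
  -- quasi-cocommutativity data
  have hq : ∀ x : H, P.R * (Bialgebra.comulAlgHom k H) x = (cop k H) x * P.R :=
    fun x => (P.quasi_cocomm x).symm
  have hcop : ∀ x : H, (cop k H) x = swapT k H (Coalgebra.comul (R := k) x) := fun _ => rfl
  have hcomulAH : ∀ x : H, (Bialgebra.comulAlgHom k H) x = Coalgebra.comul (R := k) x :=
    fun _ => rfl
  have hrv : ∀ x : H, P.Rinv * (cop k H) x = (Bialgebra.comulAlgHom k H) x * P.Rinv := by
    intro x
    rw [hcop, hcomulAH]
    calc P.Rinv * swapT k H (Coalgebra.comul (R := k) x)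
        = P.Rinv * (swapT k H (Coalgebra.comul (R := k) x) * P.R) * P.Rinv := by
          rw [mul_assoc, mul_assoc, P.mul_inv, mul_one]
      _ = P.Rinv * (P.R * Coalgebra.comul (R := k) x) * P.Rinv := by
          rw [P.quasi_cocomm x]
      _ = Coalgebra.comul (R := k) x * P.Rinv := by
          rw [← mul_assoc, P.inv_mul, one_mul]
  have hχc : ∀ x : H, P.χ * (Bialgebra.comulAlgHom k H) x = (Bialgebra.comulAlgHom k H) x * P.χ :=
    fun x => P.chi_comm x
  -- commutation lemmas
  have cR23 : ∀ X, leg23 k H P.R * idComul k H X = idComul' k H X * leg23 k H P.R :=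
    fun X => key23 P.R P.R _ _ hq X
  have cRv23 : ∀ X, leg23 k H P.Rinv * idComul' k H X = idComul k H X * leg23 k H P.Rinv :=
    fun X => key23 P.Rinv P.Rinv _ _ hrv X
  have cχ23 : ∀ X, leg23 k H P.χ * idComul k H X = idComul k H X * leg23 k H P.χ :=
    fun X => key23 P.χ P.χ _ _ hχc X
  have cR12 : ∀ X, leg12 k H P.R * comulId k H X = comulId' k H X * leg12 k H P.R :=
    fun X => key12 P.R P.R _ _ hq X
  have cRv12 : ∀ X, leg12 k H P.Rinv * comulId' k H X = comulId k H X * leg12 k H P.Rinv :=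
    fun X => key12 P.Rinv P.Rinv _ _ hrv X
  have cχ12 : ∀ X, leg12 k H P.χ * comulId k H X = comulId k H X * leg12 k H P.χ :=
    fun X => key12 P.χ P.χ _ _ hχc X
  have cR13a : ∀ X, leg13 k H P.R * permP12 k H (idComul k H X)
      = permP12 k H (idComul' k H X) * leg13 k H P.R :=
    fun X => key13a P.R P.R _ _ hq X
  have cχ13a : ∀ X, leg13 k H P.χ * permP12 k H (idComul k H X)
      = permP12 k H (idComul k H X) * leg13 k H P.χ :=
    fun X => key13a P.χ P.χ _ _ hχc X
  have cR13b : ∀ X, leg13 k H P.R * permP23 k H (comulId k H X)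
      = permP23 k H (comulId' k H X) * leg13 k H P.R :=
    fun X => key13b P.R P.R _ _ hq X
  have cχ13b : ∀ X, leg13 k H P.χ * permP23 k H (comulId k H X)
      = permP23 k H (comulId k H X) * leg13 k H P.χ :=
    fun X => key13b P.χ P.χ _ _ hχc X
  -- cocycle consequences
  have hA'Bi' : (leg12 k H F * comulId k H F) * (comulId k H Finv * leg12 k H Finv) = 1 :=
    conjInv' h12_FG (mapmul_one _ hF1)
  have hBiA : (idComul k H Finv * leg23 k H Finv) * (leg23 k H F * idComul k H F) = 1 :=
    conjInv' (mapmul_one _ hF2) hn_GF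
  have hAi_eq : idComul k H Finv * leg23 k H Finv = comulId k H Finv * leg12 k H Finv := by
    refine (invUnique' (a := leg23 k H F * idComul k H F) ?_ hBiA).symm
    rw [← hcocycle]; exact hA'Bi'
  have hp12A : leg12 k H (swapT k H F) * comulId' k H F
      = leg13 k H F * permP12 k H (idComul k H F) := by
    rw [← E9, ← E10, ← map_mul, hcocycle, map_mul, E11]
  have hp23A : leg23 k H (swapT k H F) * idComul' k H F
      = leg13 k H F * permP23 k H (comulId k H F) := by
    rw [← E15, ← E14, ← map_mul, ← hcocycle, map_mul, E12]
  have hσmA : cycR k H (leg23 k H F * idComul k H F)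
      = leg13 k H (swapT k H F) * permP12 k H (idComul' k H F) := by
    rw [map_mul, E1, E3]
  have hσiA : cycL k H (leg12 k H F * comulId k H F)
      = leg13 k H (swapT k H F) * permP23 k H (comulId' k H F) := by
    rw [map_mul, E5, E7]
  have h1head : idComul k H (swapT k H F)
      = leg23 k H Finv * cycR k H (leg23 k H F * idComul k H F) := by
    rw [← E4, ← hcocycle, map_mul, E2, sand hn_GF]
  have h2head : comulId k H (swapT k H F)
      = leg12 k H Finv * cycL k H (leg12 k H F * comulId k H F) := by
    rw [← E8, hcocycle, map_mul, E6, sand h12_GF]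
  have hsplit12 : comulId' k H F
      = leg12 k H (swapT k H Finv) * (leg13 k H F * permP12 k H (idComul k H F)) := by
    rw [← hp12A, sand hτ12_GF]
  have hsplit23 : idComul' k H F
      = leg23 k H (swapT k H Finv) * (leg13 k H F * permP23 k H (comulId k H F)) := by
    rw [← hp23A, sand hτ23_GF]
  have e1 : permP12 k H (idComul k H F)
      = leg13 k H Finv * (leg12 k H (swapT k H F) * comulId' k H F) := by
    rw [hp12A, sand h13_GF]
  have hp12inv : permP12 k H (idComul k H F) * comulId' k H Finv
      = leg13 k H Finv * leg12 k H (swapT k H F) := by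
    rw [e1]; simp only [mul_assoc]
    rw [mapmul_one (comulId' k H) hF1, mul_one]
  have e2 : permP23 k H (comulId k H F)
      = leg13 k H Finv * (leg23 k H (swapT k H F) * idComul' k H F) := by
    rw [hp23A, sand h13_GF]
  have hp23inv : permP23 k H (comulId k H F) * idComul' k H Finv
      = leg13 k H Finv * leg23 k H (swapT k H F) := by
    rw [e2]; simp only [mul_assoc]
    rw [mapmul_one (idComul' k H) hF1, mul_one]
  refine ⟨⟨?_, ?_⟩, ?_, ?_, ?_, ?_, ?_, ?_, ?_⟩
  · -- RF * RFinv = 1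
    simp only [mul_assoc]
    rw [sand hF2, sand P.mul_inv, ← map_mul, hF1, map_one]
  · -- RFinv * RF = 1
    simp only [mul_assoc]
    rw [sand hττ2, sand P.inv_mul, hF1]
  · -- quasi-cocommutativity
    intro h
    show swapT k H (F * Coalgebra.comul (R := k) h * Finv) * (swapT k H F * P.R * Finv)
        = swapT k H F * P.R * Finv * (F * Coalgebra.comul (R := k) h * Finv)
    simp only [map_mul, mul_assoc]
    rw [sand hττ2, sand hF2, mm (P.quasi_cocomm h)]
  · -- hexagon 1 for RF
    rw [S1]
    simp only [map_mul, mul_assoc]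
    rw [h1head]
    simp only [mul_assoc]
    rw [sand hn_FG, hσmA]
    simp only [mul_assoc]
    rw [P.hex1]
    simp only [mul_assoc]
    rw [← mm (cR13a F), hAi_eq, mm (cR12 Finv), mm hp12inv]
  · -- hexagon 2 for RF
    rw [S2]
    simp only [map_mul, mul_assoc]
    rw [h2head]
    simp only [mul_assoc]
    rw [sand h12_FG, hσiA]
    simp only [mul_assoc]
    rw [P.hex2]
    simp only [mul_assoc]
    rw [← mm (cR13b F), ← hAi_eq, mm (cR23 Finv), mm hp23inv]
  · -- chi commutation
    intro h
    show F * P.χ * Finv * (F * Coalgebra.comul (R := k) h * Finv)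
        = F * Coalgebra.comul (R := k) h * Finv * (F * P.χ * Finv)
    simp only [mul_assoc]
    rw [sand hF2, sand hF2, mm (P.chi_comm h)]
  · -- chi hexagon 1
    rw [S1]
    simp only [map_mul, mul_assoc]
    rw [P.chi_hex1]
    simp only [mul_add, add_mul, mul_assoc]
    congr 1
    · rw [← mm hcocycle, hAi_eq, ← mm (cχ12 F), sand (mapmul_one (comulId k H) hF1)]
    · rw [← mm hcocycle, hAi_eq, ← mm (cRv12 F), mm (cR12 Finv), hsplit12]
      simp only [mul_assoc]
      rw [← mm (cχ13a F), mm hp12inv]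
  · -- chi hexagon 2
    rw [S2]
    simp only [map_mul, mul_assoc]
    rw [P.chi_hex2]
    simp only [mul_add, add_mul, mul_assoc]
    congr 1
    · rw [mm hcocycle, ← hAi_eq, ← mm (cχ23 F), sand (mapmul_one (idComul k H) hF1)]
    · rw [mm hcocycle, ← hAi_eq, ← mm (cRv23 F), mm (cR23 Finv), hsplit23]
      simp only [mul_assoc]
      rw [← mm (cχ13b F), mm hp23inv]
  · -- Cartier
    intro hCart
    show swapT k H F * P.R * Finv * (F * P.χ * Finv)
        = swapT k H (F * P.χ * Finv) * (swapT k H F * P.R * Finv)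
    simp only [map_mul, mul_assoc]
    rw [sand hF2, sand hττ2, mm hCart]

end
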